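/- Let X and Y be topological spaces, D_X ⊆ X and D_Y ⊆ Y closed discrete subsets, and φ : Y → X an injection such that φ[Y \ D_Y] = D_X and φ[Y] is dense in X. If every open subset of X is F_σ in X and every open subset of Y is F_σ in Y, then every open subset of the space ⟨X, σ(τ_X, τ_Y, φ)⟩ is F_σ in ⟨X, σ(τ_X, τ_Y, φ)⟩. -/

import Mathlib

open Set Topology

/-- The topology σ(τ_X, τ_Y, φ): open sets of X whose φ-preimage is open in Y. -/
def sigmaTop {X : Type*} {Y : Type*} (tX : TopologicalSpace X) (tY : TopologicalSpace Y)
    (φ : Y → X) : TopologicalSpace X where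
  IsOpen U := tX.IsOpen U ∧ tY.IsOpen (φ ⁻¹' U)
  isOpen_univ := ⟨tX.isOpen_univ, by simpa using tY.isOpen_univ⟩
  isOpen_inter U V hU hV :=
    ⟨tX.isOpen_inter U V hU.1 hV.1, by
      rw [Set.preimage_inter]
      exact tY.isOpen_inter _ _ hU.2 hV.2⟩
  isOpen_sUnion s hs :=
    ⟨tX.isOpen_sUnion s fun U hU => (hs U hU).1, by
      rw [Set.preimage_sUnion]
      exact @isOpen_biUnion _ _ tY _ _ fun U hU => (hs U hU).2⟩

/-- A set is closed discrete: closed, and its subspace topology is discrete. -/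
def ClosedDiscrete {X : Type*} (t : TopologicalSpace X) (D : Set X) : Prop :=
  @IsClosed X t D ∧ @DiscreteTopology D (TopologicalSpace.induced (Subtype.val : D → X) t)

/-- A set is F_σ: a countable union of closed sets. -/
def IsFsigma {X : Type*} (t : TopologicalSpace X) (s : Set X) : Prop :=
  ∃ F : ℕ → Set X, (∀ n, @IsClosed X t (F n)) ∧ s = ⋃ n, F n

/-- Any subset of a closed discrete set is closed. -/
lemma closed_of_subset_closedDiscrete {Z : Type*} {t : TopologicalSpace Z} {D : Set Z}
    (hD : ClosedDiscrete t D) {S : Set Z} (hS : S ⊆ D) : @IsClosed Z t S := by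
  letI := t
  obtain ⟨hDc, hdisc⟩ := hD
  haveI := hdisc
  have hSeq : S = (Subtype.val : D → Z) '' (Subtype.val ⁻¹' S) := by
    rw [Subtype.image_preimage_coe]
    exact (Set.inter_eq_right.mpr hS).symm
  rw [hSeq]
  exact hDc.isClosedMap_subtype_val _ (isClosed_discrete _)

theorem statement6 {X Y : Type*} (tX : TopologicalSpace X) (tY : TopologicalSpace Y)
    (DX : Set X) (DY : Set Y) (φ : Y → X)
    (hDX : ClosedDiscrete tX DX) (hDY : ClosedDiscrete tY DY)
    (hinj : Function.Injective φ)
    (himg : φ '' DYᶜ = DX)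
    (hdense : @Dense X tX (Set.range φ))
    (hX : ∀ U : Set X, tX.IsOpen U → IsFsigma tX U)
    (hY : ∀ V : Set Y, tY.IsOpen V → IsFsigma tY V) :
    ∀ U : Set X, (sigmaTop tX tY φ).IsOpen U → IsFsigma (sigmaTop tX tY φ) U := by
  intro U hU
  obtain ⟨hUX, hUY⟩ := hU
  -- preimage of DX is the complement of DY
  have hpre : φ ⁻¹' DX = DYᶜ := by
    ext y
    constructor
    · intro hy hyD
      rw [← himg] at hy
      obtain ⟨y', hy', he⟩ := hy
      exact hy' (hinj he ▸ hyD)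
    · intro hy
      rw [← himg]; exact ⟨y, hy, rfl⟩
  -- σ-closedness criterion
  have sclosed : ∀ C : Set X, @IsClosed X tX C → @IsClosed Y tY (φ ⁻¹' C) →
      @IsClosed X (sigmaTop tX tY φ) C := by
    intro C h1 h2
    have hc : (sigmaTop tX tY φ).IsOpen Cᶜ :=
      ⟨h1.isOpen_compl, by rw [Set.preimage_compl]; exact h2.isOpen_compl⟩
    exact @IsClosed.mk X (sigmaTop tX tY φ) C hc
  -- decomposition of U ∖ DX
  obtain ⟨F, hFc, hFU⟩ := hX (U ∩ DXᶜ) (tX.isOpen_inter _ _ hUX hDX.1.isOpen_compl)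
  -- decomposition of φ⁻¹U ∖ DY
  obtain ⟨G, hGc, hGU⟩ := hY (φ ⁻¹' U ∩ DYᶜ)
    (tY.isOpen_inter _ _ hUY hDY.1.isOpen_compl)
  have hFsub : ∀ n, F n ⊆ U ∩ DXᶜ := fun n => hFU ▸ Set.subset_iUnion F n
  have hGsub : ∀ n, G n ⊆ φ ⁻¹' U ∩ DYᶜ := fun n => hGU ▸ Set.subset_iUnion G n
  refine ⟨fun n => F n ∪ φ '' G n, fun n => ?_, ?_⟩
  · -- each F n ∪ φ '' G n is σ-closed
    have hGDX : φ '' G n ⊆ DX := by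
      rw [← himg]
      exact Set.image_mono (fun y hy => (hGsub n hy).2)
    have hFDY : φ ⁻¹' (F n) ⊆ DY := by
      intro y hy
      by_contra hyD
      have : y ∈ φ ⁻¹' DX := by rw [hpre]; exact hyD
      exact (hFsub n hy).2 this
    apply sclosed
    · exact @IsClosed.union X _ _ tX (hFc n) (closed_of_subset_closedDiscrete hDX hGDX)
    · rw [Set.preimage_union, Set.preimage_image_eq _ hinj]
      exact @IsClosed.union Y _ _ tY (closed_of_subset_closedDiscrete hDY hFDY) (hGc n)
  · -- the union is U
    have himgG : φ '' (φ ⁻¹' U ∩ DYᶜ) = U ∩ DX := by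
      rw [Set.image_inter hinj, himg, Set.image_preimage_eq_inter_range]
      have hDXr : DX ⊆ Set.range φ := by
        rw [← himg]; exact Set.image_subset_range _ _
      rw [Set.inter_assoc]
      congr 1
      exact Set.inter_eq_right.mpr hDXr
    calc U = (U ∩ DXᶜ) ∪ (U ∩ DX) := by
            rw [← Set.inter_union_distrib_left, Set.compl_union_self, Set.inter_univ]
      _ = (⋃ n, F n) ∪ φ '' (φ ⁻¹' U ∩ DYᶜ) := by rw [← hFU, himgG]
      _ = (⋃ n, F n) ∪ (⋃ n, φ '' G n) := by rw [hGU, Set.image_iUnion]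
      _ = ⋃ n, (F n ∪ φ '' G n) := (Set.iUnion_union_distrib _ _).symm
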